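/- Let G be an infinite amenable group with Følner net F = (F_i), A a finite nonempty alphabet, and X, Y ⊆ A^G subsets such that the restrictions to G∖S coincide, X|_{G∖S} = Y|_{G∖S}, for some finite S ⊆ G. Then the upper natural mean F-entropies agree: ent̄_F(X) = ent̄_F(Y). -/

import Mathlib

open Filter

-- counting lemma
lemma aux_count {G A : Type*} [Fintype A] [Nonempty A]
    (X Y : Set (G → A)) (S : Set G) (s : Finset G) (hs : ↑s = S)
    (hXY : (fun x (g : ↥(Sᶜ)) => x g.1) '' X = (fun x (g : ↥(Sᶜ)) => x g.1) '' Y)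
    (E : Finset G) :
    ((fun x (g : (E : Set G)) => x g.1) '' X).ncard ≤
      ((fun x (g : (E : Set G)) => x g.1) '' Y).ncard * Fintype.card A ^ s.card := by
  classical
  set rE : (G → A) → (↥(E : Set G) → A) := fun x g => x g.1 with hrE
  have h1 : ∀ p : ↥(rE '' X), ∃ y ∈ Y, ∀ g : (E : Set G), (g : G) ∉ S → y g = p.1 g := by
    rintro ⟨p, hp⟩
    obtain ⟨x, hx, hxp⟩ := hp
    have hmem : (fun g : ↥(Sᶜ) => x g.1) ∈ (fun x (g : ↥(Sᶜ)) => x g.1) '' Y := by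
      rw [← hXY]; exact Set.mem_image_of_mem _ hx
    obtain ⟨y, hy, hyx⟩ := hmem
    refine ⟨y, hy, fun g hg => ?_⟩
    have h1 : y g = x g := congrFun hyx ⟨g, hg⟩
    have h2 : x g = p g := congrFun hxp g
    rw [h1, h2]
  choose yf hyf hyp using h1
  set f : ↥(rE '' X) → ↥(rE '' Y) × (↥s → A) := fun p =>
    (⟨rE (yf p), ⟨yf p, hyf p, rfl⟩⟩,
      fun g => if h : g.1 ∈ E then p.1 ⟨g.1, h⟩ else Classical.arbitrary A) with hf
  have hinj : Function.Injective f := by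
    intro p q h
    have h1 : rE (yf p) = rE (yf q) := congrArg (fun z => (Prod.fst z).1) h
    have h2 := congrArg Prod.snd h
    apply Subtype.ext
    funext g
    by_cases hg : (g : G) ∈ S
    · have hgs : g.1 ∈ s := by rw [← hs] at hg; exact hg
      have := congrFun h2 ⟨g.1, hgs⟩
      simpa [hf, g.2] using this
    · have e1 : yf p g = p.1 g := hyp p g hg
      have e2 : yf q g = q.1 g := hyp q g hg
      have e3 : yf p g.1 = yf q g.1 := congrFun h1 g
      rw [← e1, ← e2, e3]
  have hfin : Finite (↥(rE '' Y) × (↥s → A)) := by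
    infer_instance
  calc (rE '' X).ncard = Nat.card ↥(rE '' X) := (Nat.card_coe_set_eq _).symm
    _ ≤ Nat.card (↥(rE '' Y) × (↥s → A)) := Nat.card_le_card_of_injective f hinj
    _ = (rE '' Y).ncard * Fintype.card A ^ s.card := by
        rw [Nat.card_prod, Nat.card_coe_set_eq, Nat.card_eq_fintype_card]
        simp [Fintype.card_fun]

lemma aux_card {G : Type*} [Group G] [DecidableEq G] [Infinite G]
    {I : Type*} [Preorder I] [IsDirected I (· ≤ ·)] [Nonempty I]
    (F : I → Finset G) (hne : ∀ i, (F i).Nonempty)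
    (hFol : ∀ g : G, Tendsto
      (fun i => (((F i) \ (F i).image (· * g)).card : ℝ) / (F i).card) atTop (nhds 0)) :
    Tendsto (fun i => ((F i).card : ℝ)) atTop atTop := by
  have key : ∀ n : ℕ, ∀ᶠ i in (atTop : Filter I), n ≤ (F i).card := by
    intro n
    rcases Nat.eq_zero_or_pos n with hn | hn
    · exact Eventually.of_forall fun i => hn ▸ Nat.zero_le _
    obtain ⟨T, hT⟩ := Infinite.exists_subset_card_eq G n
    have hev : ∀ᶠ i in (atTop : Filter I), ∀ g ∈ T,
        ((F i \ (F i).image (· * g)).card : ℝ) / (F i).card < 1 / (n + 1) := by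
      rw [eventually_all_finset]
      intro g _
      exact (hFol g).eventually (eventually_lt_nhds (by positivity))
    filter_upwards [hev] with i hi
    set m := (F i).card with hm
    have hm0 : 0 < m := (hne i).card_pos
    have hm0' : (0 : ℝ) < m := by exact_mod_cast hm0
    have hterm : ∀ g ∈ T, ((F i \ (F i).image (· * g)).card : ℝ) < m / (n + 1) := by
      intro g hg
      have := hi g hg
      rw [div_lt_div_iff₀ hm0' (by positivity)] at this
      rw [lt_div_iff₀ (by positivity)]
      linarith [this]
    have hTne : T.Nonempty := Finset.card_pos.mp (hT ▸ hn)
    set D := T.biUnion (fun g => F i \ (F i).image (· * g)) with hD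
    have hDcard : (D.card : ℝ) < m := by
      calc (D.card : ℝ) ≤ ∑ g ∈ T, ((F i \ (F i).image (· * g)).card : ℝ) := by
            exact_mod_cast Finset.card_biUnion_le
        _ < ∑ _g ∈ T, (m / (n + 1) : ℝ) := Finset.sum_lt_sum_of_nonempty hTne hterm
        _ = n * (m / (n + 1)) := by rw [Finset.sum_const, hT]; push_cast; ring
        _ < m := by
            rw [mul_div_assoc']
            rw [div_lt_iff₀ (by positivity)]
            have : (0:ℝ) < n + 1 := by positivity
            nlinarith
    have hnsub : ¬ (F i ⊆ D) := by
      intro hsub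
      exact absurd (Nat.cast_le.mpr (Finset.card_le_card hsub)) (not_le.mpr hDcard)
    obtain ⟨x, hxF, hxD⟩ := Finset.not_subset.mp hnsub
    have hmem : ∀ g ∈ T, x * g⁻¹ ∈ F i := by
      intro g hg
      have : x ∉ F i \ (F i).image (· * g) := fun h => hxD (Finset.mem_biUnion.mpr ⟨g, hg, h⟩)
      have hx2 : x ∈ (F i).image (· * g) := by
        by_contra hc
        exact this (Finset.mem_sdiff.mpr ⟨hxF, hc⟩)
      obtain ⟨y, hy, hyx⟩ := Finset.mem_image.mp hx2
      have : y = x * g⁻¹ := by rw [← hyx]; group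
      rwa [← this]
    have : T.card ≤ (F i).card :=
      Finset.card_le_card_of_injOn (fun g => x * g⁻¹) hmem (by
        intro a _ b _ hab
        simpa using mul_left_cancel hab)
    omega
  rw [tendsto_atTop]
  intro b
  filter_upwards [key ⌈b⌉₊] with i hi
  calc b ≤ (⌈b⌉₊ : ℝ) := Nat.le_ceil b
    _ ≤ (F i).card := by exact_mod_cast hi

lemma aux_limsup_le {I : Type*} [Preorder I] [IsDirected I (· ≤ ·)] [Nonempty I]
    (u v w : I → ℝ) (C c : ℝ) (hb : ∀ i, v i ≤ C) (hb' : ∀ i, c ≤ u i)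
    (hle : ∀ i, u i ≤ v i + w i) (hw : Tendsto w atTop (nhds 0)) :
    limsup u atTop ≤ limsup v atTop := by
  haveI : (atTop : Filter I).NeBot := atTop_neBot_iff.mpr ⟨‹_›, ‹_›⟩
  have hvb : IsBoundedUnder (· ≤ ·) (atTop : Filter I) v := isBoundedUnder_of ⟨C, hb⟩
  have hcob : IsCoboundedUnder (· ≤ ·) (atTop : Filter I) u :=
    isCoboundedUnder_le_of_le atTop hb'
  refine le_of_forall_pos_le_add fun ε hε => ?_
  have h1 : ∀ᶠ i in (atTop : Filter I), v i < limsup v atTop + ε / 2 :=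
    eventually_lt_of_limsup_lt (by linarith) hvb
  have h2 : ∀ᶠ i in (atTop : Filter I), w i < ε / 2 :=
    hw.eventually (eventually_lt_nhds (by linarith))
  refine limsup_le_of_le hcob ?_
  filter_upwards [h1, h2] with i hi1 hi2
  have := hle i
  linarith

lemma aux_ent_le {G : Type*} [Group G] [DecidableEq G] [Infinite G]
    {I : Type*} [Preorder I] [IsDirected I (· ≤ ·)] [Nonempty I]
    (F : I → Finset G) (hne : ∀ i, (F i).Nonempty)
    (hFol : ∀ g : G, Tendsto
      (fun i => (((F i) \ (F i).image (· * g)).card : ℝ) / (F i).card) atTop (nhds 0))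
    {A : Type*} [Fintype A] [Nonempty A]
    (X Y : Set (G → A)) (S : Set G) (hS : S.Finite)
    (hX : X.Nonempty) (hY : Y.Nonempty)
    (hXY : (fun x (g : ↥(Sᶜ)) => x g.1) '' X = (fun x (g : ↥(Sᶜ)) => x g.1) '' Y) :
    limsup (fun i =>
        Real.log (((fun x (g : (F i : Set G)) => x g.1) '' X).ncard) / (F i).card) atTop ≤
    limsup (fun i =>
        Real.log (((fun x (g : (F i : Set G)) => x g.1) '' Y).ncard) / (F i).card) atTop := by
  classical
  set s := hS.toFinset with hsdef
  have hs : ↑s = S := hS.coe_toFinset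
  set K := Real.log (Fintype.card A) with hKdef
  have hA1 : 1 ≤ Fintype.card A := Fintype.card_pos
  have hK0 : 0 ≤ K := Real.log_nonneg (by exact_mod_cast hA1)
  have hub : ∀ (Z : Set (G → A)) (i : I),
      ((fun x (g : (F i : Set G)) => x g.1) '' Z).ncard ≤ Fintype.card A ^ (F i).card := by
    intro Z i
    calc ((fun x (g : (F i : Set G)) => x g.1) '' Z).ncard
        ≤ (Set.univ : Set (↥(F i : Set G) → A)).ncard :=
          Set.ncard_le_ncard (Set.subset_univ _) Set.finite_univ
      _ = Fintype.card A ^ (F i).card := by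
          rw [Set.ncard_univ, Nat.card_eq_fintype_card]; simp
  have hlb : ∀ (Z : Set (G → A)) (hZ : Z.Nonempty) (i : I),
      1 ≤ ((fun x (g : (F i : Set G)) => x g.1) '' Z).ncard := by
    intro Z hZ i
    exact (Set.ncard_pos (Set.toFinite _)).mpr (hZ.image _)
  have hm : ∀ i : I, (0:ℝ) < (F i).card := by
    intro i; exact_mod_cast (hne i).card_pos
  refine aux_limsup_le _ _ (fun i => (s.card * K) / (F i).card) K 0 ?_ ?_ ?_ ?_
  · -- v i ≤ K
    intro i
    rw [div_le_iff₀ (hm i)]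
    calc Real.log (((fun x (g : (F i : Set G)) => x g.1) '' Y).ncard)
        ≤ Real.log ((Fintype.card A : ℝ) ^ (F i).card) := by
          apply Real.log_le_log (by exact_mod_cast hlb Y hY i)
          exact_mod_cast hub Y i
      _ = (F i).card * K := by rw [Real.log_pow]
      _ = K * (F i).card := by ring
  · -- 0 ≤ u i
    intro i
    apply div_nonneg _ (le_of_lt (hm i))
    exact Real.log_nonneg (by exact_mod_cast hlb X hX i)
  · -- u i ≤ v i + w i
    intro i
    have hcnt := aux_count X Y S s hs hXY (F i)
    have hYpos : (0:ℝ) < (((fun x (g : (F i : Set G)) => x g.1) '' Y).ncard : ℝ) := by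
      exact_mod_cast hlb Y hY i
    have hlog : Real.log (((fun x (g : (F i : Set G)) => x g.1) '' X).ncard)
        ≤ Real.log (((fun x (g : (F i : Set G)) => x g.1) '' Y).ncard) + s.card * K := by
      calc Real.log (((fun x (g : (F i : Set G)) => x g.1) '' X).ncard)
          ≤ Real.log ((((fun x (g : (F i : Set G)) => x g.1) '' Y).ncard : ℝ)
              * (Fintype.card A : ℝ) ^ s.card) := by
            apply Real.log_le_log (by exact_mod_cast hlb X hX i)
            exact_mod_cast hcnt
        _ = _ := by
            rw [Real.log_mul (ne_of_gt hYpos) (by positivity), Real.log_pow]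
    rw [← add_div]
    gcongr
  · have h := (aux_card F hne hFol).inv_tendsto_atTop
    have h2 := h.const_mul ((s.card : ℝ) * K)
    rw [mul_zero] at h2
    simpa [div_eq_mul_inv] using h2

theorem stmt_10 {G : Type*} [Group G] [DecidableEq G] [Infinite G]
    {I : Type*} [Preorder I] [IsDirected I (· ≤ ·)] [Nonempty I]
    (F : I → Finset G) (hne : ∀ i, (F i).Nonempty)
    (hFol : ∀ g : G, Tendsto
      (fun i => (((F i) \ (F i).image (· * g)).card : ℝ) / (F i).card) atTop (nhds 0))
    {A : Type*} [Fintype A] [Nonempty A]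
    (X Y : Set (G → A)) (S : Set G) (hS : S.Finite)
    (hXY : (fun x (g : ↥(Sᶜ)) => x g.1) '' X = (fun x (g : ↥(Sᶜ)) => x g.1) '' Y) :
    limsup (fun i =>
        Real.log (((fun x (g : (F i : Set G)) => x g.1) '' X).ncard) / (F i).card) atTop =
    limsup (fun i =>
        Real.log (((fun x (g : (F i : Set G)) => x g.1) '' Y).ncard) / (F i).card) atTop := by
  rcases X.eq_empty_or_nonempty with hX | hX
  · subst hX
    have hY : Y = ∅ := by
      rw [Set.image_empty] at hXY
      exact Set.image_eq_empty.mp hXY.symm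
    rw [hY]
  · have hY : Y.Nonempty := by
      rcases Y.eq_empty_or_nonempty with h | h
      · subst h
        rw [Set.image_empty, Set.image_eq_empty] at hXY
        exact absurd hXY (Set.nonempty_iff_ne_empty.mp hX)
      · exact h
    exact le_antisymm (aux_ent_le F hne hFol X Y S hS hX hY hXY)
      (aux_ent_le F hne hFol Y X S hS hY hX hXY.symm)
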